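/- Let q : ℝ → ℝ be a quadratic polynomial that is nonnegative on an interval [a,b] with a < b. Then there exist real numbers α, β and γ ≥ 0 such that q(u) = (αu + β)² + γ(u−a)(b−u) for all u. -/

import Mathlib

set_option maxHeartbeats 1000000 in
/-- Lukács's theorem for quadratics: a quadratic polynomial `q(u) = p u² + q₁ u + r` that is
nonnegative on `[a, b]` (with `a < b`) can be written as `(α u + β)² + γ (u - a)(b - u)`
with `γ ≥ 0`. -/
theorem lukacs_quadratic
    (p q₁ r a b : ℝ) (hab : a < b)
    (hnonneg : ∀ u ∈ Set.Icc a b, 0 ≤ p * u ^ 2 + q₁ * u + r) :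
    ∃ α β γ : ℝ, 0 ≤ γ ∧
      ∀ u : ℝ, p * u ^ 2 + q₁ * u + r = (α * u + β) ^ 2 + γ * (u - a) * (b - u) := by
  have hba : (0:ℝ) < b - a := sub_pos.2 hab
  have hd : b - a ≠ 0 := ne_of_gt hba
  have hqa : 0 ≤ p * a ^ 2 + q₁ * a + r := hnonneg a ⟨le_refl a, hab.le⟩
  have hqb : 0 ≤ p * b ^ 2 + q₁ * b + r := hnonneg b ⟨hab.le, le_refl b⟩
  obtain ⟨sa, hsa0, hsa2⟩ : ∃ s : ℝ, 0 ≤ s ∧ s ^ 2 = p * a ^ 2 + q₁ * a + r :=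
    ⟨Real.sqrt _, Real.sqrt_nonneg _, Real.sq_sqrt hqa⟩
  obtain ⟨sb, hsb0, hsb2⟩ : ∃ s : ℝ, 0 ≤ s ∧ s ^ 2 = p * b ^ 2 + q₁ * b + r :=
    ⟨Real.sqrt _, Real.sqrt_nonneg _, Real.sq_sqrt hqb⟩
  have key : p * (b - a) ^ 2 ≤ (sa + sb) ^ 2 := by
    rcases le_or_gt p 0 with hp | hp
    · nlinarith [sq_nonneg (sa + sb), sq_nonneg (b - a), mul_nonneg hsa0 hsb0]
    · rcases lt_or_ge 0 (2*p*a + q₁) with hs | hs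
      · nlinarith [mul_pos hs hba, mul_nonneg hsa0 hsb0, hqa]
      · rcases lt_or_ge (2*p*b + q₁) 0 with ht | ht
        · nlinarith [mul_pos (neg_pos.2 ht) hba, mul_nonneg hsa0 hsb0, hqb]
        · -- vertex in [a,b]
          have hva : a ≤ -q₁/(2*p) := by
            rw [le_div_iff₀ (by linarith)]; nlinarith
          have hvb : -q₁/(2*p) ≤ b := by
            rw [div_le_iff₀ (by linarith)]; nlinarith
          have hqv := hnonneg _ ⟨hva, hvb⟩
          have hv : p * (-q₁/(2*p)) ^ 2 + q₁ * (-q₁/(2*p)) + r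
              = (4*p*r - q₁^2) / (4*p) := by
            field_simp; ring
          rw [hv, le_div_iff₀ (by positivity)] at hqv
          have hc4 : 0 ≤ 4*p*r - q₁^2 := by linarith
          have h4a : 4*p*sa^2 = (2*p*a+q₁)^2 + (4*p*r - q₁^2) := by
            rw [hsa2]; ring
          have h4b : 4*p*sb^2 = (2*p*b+q₁)^2 + (4*p*r - q₁^2) := by
            rw [hsb2]; ring
          have hY0 : 0 ≤ (-(2*p*a+q₁))*(2*p*b+q₁) + (4*p*r - q₁^2) :=
            add_nonneg (mul_nonneg (neg_nonneg.2 hs) ht) hc4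
          have hX0 : 0 ≤ 4*p*(sa*sb) := by positivity
          have hsq : ((-(2*p*a+q₁))*(2*p*b+q₁) + (4*p*r - q₁^2))^2 ≤ (4*p*(sa*sb))^2 := by
            have : (4*p*(sa*sb))^2 = (4*p*sa^2) * (4*p*sb^2) := by ring
            rw [this, h4a, h4b]
            nlinarith [mul_nonneg hc4 (sq_nonneg (2*p*a+q₁ + (2*p*b+q₁)))]
          have hprod : (-(2*p*a+q₁))*(2*p*b+q₁) + (4*p*r - q₁^2) ≤ 4*p*(sa*sb) := by
            nlinarith [hsq, hX0, hY0]
          have hfin : 4*p*(p*(b-a)^2) ≤ 4*p*((sa+sb)^2) := by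
            nlinarith [hprod, h4a, h4b, hc4]
          nlinarith [hfin, hp]
  obtain ⟨A, hA⟩ : ∃ A : ℝ, A * (b - a) = sa + sb := ⟨(sa+sb)/(b-a), div_mul_cancel₀ _ hd⟩
  refine ⟨A, -sa - A*a, A^2 - p, ?_, ?_⟩
  · have h1 : (sa+sb)^2 = A^2 * (b-a)^2 := by rw [← hA]; ring
    nlinarith [key, h1, mul_pos hba hba]
  · intro u
    apply mul_left_cancel₀ hd
    linear_combination (-(u-a)*(b-a)*A + (u-a)*(sa-sb)) * hA + (u - b) * hsa2 + (-(u-a)) * hsb2
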